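/- Mean curvature blow-up forces focal points: let H : [t₀, b) → ℝ be differentiable with H' + H²/(n−1) ≤ (n−1)κ and H(t₀) = β̃. Then H(t) ≤ H_{κ,β̃}(t − t₀) for t ∈ [t₀, t₀ + b_{κ,β̃}), and H(t) → −∞ as t → (t₀ + b_{κ,β̃})⁻ is forced whenever H remains defined up to that time; in particular H cannot remain finite on [t₀, b) if b > t₀ + b_{κ,β̃}. -/

import Mathlib

open Real Set Filter Topology

private lemma const_decay (f : ℝ → ℝ) (c : ℝ) (hf : ∀ s, HasDerivAt f (c * f s) s)
    (x y : ℝ) : f x * Real.exp (-c * x) = f y * Real.exp (-c * y) := by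
  have hg : ∀ s, HasDerivAt (fun s => f s * Real.exp (-c * s)) 0 s := by
    intro s
    have he : HasDerivAt (fun s : ℝ => Real.exp (-c * s)) (Real.exp (-c * s) * (-c * 1)) s :=
      ((hasDerivAt_id s).const_mul (-c)).exp
    have := (hf s).mul he
    refine this.congr_deriv ?_
    ring
  exact is_const_of_deriv_eq_zero (fun s => (hg s).differentiableAt)
    (fun s => (hg s).deriv) x y

private lemma pos_on (fc : ℝ → ℝ) (bc : ℝ) (hcont : Continuous fc)
    (hfcne : ∀ s ∈ Set.Ico (0:ℝ) bc, fc s ≠ 0) (h0 : 0 < fc 0) :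
    ∀ s ∈ Set.Ico (0:ℝ) bc, 0 < fc s := by
  intro s hs
  rcases (hfcne s hs).lt_or_gt with hneg | hpos
  · exfalso
    have hmem : (0:ℝ) ∈ Icc (fc s) (fc 0) := ⟨hneg.le, h0.le⟩
    obtain ⟨z, hz, hz0⟩ := intermediate_value_Icc' hs.1 hcont.continuousOn hmem
    exact hfcne z ⟨hz.1, lt_of_le_of_lt hz.2 hs.2⟩ hz0
  · exact hpos

private lemma riccati_comparison (n : ℕ) (hn : 2 ≤ n) (κ t₀ b : ℝ)
    (fc : ℝ → ℝ) (bc : ℝ)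
    (hfc : ∀ s : ℝ, DifferentiableAt ℝ fc s ∧ DifferentiableAt ℝ (deriv fc) s ∧
      deriv (deriv fc) s = κ * fc s)
    (hfcpos : ∀ s ∈ Set.Ico (0:ℝ) bc, 0 < fc s)
    (H : ℝ → ℝ)
    (hHdiff : ∀ t ∈ Set.Ico t₀ b, DifferentiableAt ℝ H t)
    (hHineq : ∀ t ∈ Set.Ico t₀ b,
      deriv H t + (H t) ^ 2 / ((n : ℝ) - 1) ≤ ((n : ℝ) - 1) * κ)
    (hH0' : H t₀ * fc 0 = ((n : ℝ) - 1) * deriv fc 0) :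
    ∀ t ∈ Set.Ico t₀ (min b (t₀ + bc)),
      H t * fc (t - t₀) ≤ ((n : ℝ) - 1) * deriv fc (t - t₀) := by
  have hn1 : (0:ℝ) < (n:ℝ) - 1 := by
    have : (2:ℝ) ≤ (n:ℝ) := by exact_mod_cast hn
    linarith
  set n1 : ℝ := (n:ℝ) - 1 with hn1def
  set u : ℝ → ℝ := fun t => H t * fc (t - t₀) - n1 * deriv fc (t - t₀) with hudef
  set D : ℝ → ℝ := fun x =>
    deriv H x * fc (x - t₀) + H x * deriv fc (x - t₀) - n1 * (κ * fc (x - t₀)) with hDdef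
  have hg : ∀ x : ℝ, HasDerivAt (fun t => fc (t - t₀)) (deriv fc (x - t₀)) x := by
    intro x
    exact ((hfc (x - t₀)).1.hasDerivAt).comp_sub_const x t₀
  have hg' : ∀ x : ℝ, HasDerivAt (fun t => deriv fc (t - t₀)) (κ * fc (x - t₀)) x := by
    intro x
    have := ((hfc (x - t₀)).2.1.hasDerivAt).comp x ((hasDerivAt_id x).sub_const t₀)
    have := ((hfc (x - t₀)).2.1.hasDerivAt).comp_sub_const x t₀
    rwa [(hfc (x - t₀)).2.2] at this
  have hu : ∀ x ∈ Set.Ico t₀ b, HasDerivAt u (D x) x := by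
    intro x hx
    exact ((hHdiff x hx).hasDerivAt.mul (hg x)).sub ((hg' x).const_mul n1)
  intro t₁ ht₁
  rcases eq_or_lt_of_le ht₁.1 with rfl | ht₀t₁
  · exact le_of_eq (by simpa using hH0')
  have ht₁b : t₁ < b := lt_of_lt_of_le ht₁.2 (min_le_left _ _)
  have ht₁bc : t₁ < t₀ + bc := lt_of_lt_of_le ht₁.2 (min_le_right _ _)
  by_contra hcon
  push_neg at hcon
  have hut₁ : 0 < u t₁ := by simp only [hudef]; linarith
  -- derivative inequality
  have hineq : ∀ x ∈ Set.Ico t₀ t₁, D x * n1 ≤ (-(H x)) * u x := by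
    intro x hx
    have hxb : x ∈ Set.Ico t₀ b := ⟨hx.1, lt_trans hx.2 ht₁b⟩
    have hpos : 0 < fc (x - t₀) :=
      hfcpos _ ⟨sub_nonneg.2 hx.1, by have := hx.2; linarith⟩
    have h1 := hHineq x hxb
    have h1' : deriv H x * n1 + H x ^ 2 ≤ n1 * κ * n1 := by
      have h2 := mul_le_mul_of_nonneg_right h1 hn1.le
      rwa [add_mul, div_mul_cancel₀ _ (ne_of_gt hn1)] at h2
    have h3 := mul_le_mul_of_nonneg_right h1' hpos.le
    simp only [hDdef, hudef]
    nlinarith [h3]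
  -- continuity of u on [t₀, t₁]
  have hucont : ContinuousOn u (Icc t₀ t₁) := by
    intro x hx
    exact ((hu x ⟨hx.1, lt_of_le_of_lt hx.2 ht₁b⟩).differentiableAt.continuousAt).continuousWithinAt
  -- first crossing point
  set S : Set ℝ := Icc t₀ t₁ ∩ u ⁻¹' Iic 0 with hSdef
  have hSne : S.Nonempty := ⟨t₀, ⟨le_rfl, ht₀t₁.le⟩, by simp [hudef, hH0']⟩
  have hSbdd : BddAbove S := ⟨t₁, fun x hx => hx.1.2⟩
  have hSclosed : IsClosed S := hucont.preimage_isClosed_of_isClosed isClosed_Icc isClosed_Iic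
  set s : ℝ := sSup S with hsdef
  have hs_mem : s ∈ S := hSclosed.csSup_mem hSne hSbdd
  have hs_le : s ≤ t₁ := hs_mem.1.2
  have hs_ge : t₀ ≤ s := hs_mem.1.1
  have hs_lt : s < t₁ := by
    rcases lt_or_eq_of_le hs_le with h | h
    · exact h
    · exfalso; rw [h] at hs_mem; exact absurd hs_mem.2 (not_le.2 hut₁)
  have hupos : ∀ x ∈ Set.Ioc s t₁, 0 < u x := by
    intro x hx
    by_contra hle
    push_neg at hle
    have hxS : x ∈ S := ⟨⟨le_trans hs_ge hx.1.le, hx.2⟩, hle⟩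
    exact absurd (le_csSup hSbdd hxS) (not_le.2 hx.1)
  have hus_nonneg : 0 ≤ u s := by
    have hcA : ContinuousAt u s :=
      (hu s ⟨hs_ge, lt_of_le_of_lt hs_le ht₁b⟩).differentiableAt.continuousAt
    have htend : Tendsto u (𝓝[>] s) (𝓝 (u s)) := hcA.tendsto.mono_left nhdsWithin_le_nhds
    refine ge_of_tendsto htend ?_
    have h2 : ∀ᶠ z in 𝓝[>] s, z < t₁ :=
      eventually_nhdsWithin_of_eventually_nhds (eventually_lt_nhds hs_lt)
    filter_upwards [h2, eventually_mem_nhdsWithin] with z hz1 hz2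
    exact (hupos z ⟨hz2, hz1.le⟩).le
  have hunonneg : ∀ x ∈ Set.Ico s t₁, 0 ≤ u x := by
    intro x hx
    rcases eq_or_lt_of_le hx.1 with heq | hlt
    · exact heq ▸ hus_nonneg
    · exact (hupos x ⟨hlt, hx.2.le⟩).le
  -- bound on H
  obtain ⟨M, hM⟩ := (isCompact_Icc : IsCompact (Icc t₀ t₁)).exists_bound_of_continuousOn
    (fun x hx => ((hHdiff x ⟨hx.1, lt_of_le_of_lt hx.2 ht₁b⟩).continuousAt).continuousWithinAt)
  set K : ℝ := M / n1 with hKdef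
  have hgron := le_gronwallBound_of_liminf_deriv_right_le
    (f := u) (f' := D) (δ := 0) (K := K) (ε := 0) (a := s) (b := t₁)
    (hucont.mono (Icc_subset_Icc hs_ge le_rfl))
    (fun x hx r hr =>
      ((hu x ⟨le_trans hs_ge hx.1, lt_trans hx.2 ht₁b⟩).hasDerivWithinAt).liminf_right_slope_le hr)
    (by exact hs_mem.2)
    ?_ t₁ ⟨hs_le, le_rfl⟩
  · rw [gronwallBound_ε0_δ0] at hgron
    exact absurd hgron (not_le.2 hut₁)
  · intro x hx
    have hx' : x ∈ Set.Ico t₀ t₁ := ⟨le_trans hs_ge hx.1, hx.2⟩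
    have h1 := hineq x hx'
    have h2 : 0 ≤ u x := hunonneg x hx
    have hMx : -(H x) ≤ M := by
      have := hM x ⟨hx'.1, hx'.2.le⟩
      rw [Real.norm_eq_abs] at this
      linarith [neg_abs_le (H x), abs_nonneg (H x), le_abs_self (H x), neg_le_abs (H x)]
    have h3 : (-(H x)) * u x ≤ M * u x := mul_le_mul_of_nonneg_right hMx h2
    rw [add_zero, hKdef, div_mul_eq_mul_div, le_div_iff₀ hn1]
    linarith

private lemma blowup_aux (n : ℕ) (hn : 2 ≤ n) (κ t₀ b : ℝ) (hb : t₀ < b)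
    (fc : ℝ → ℝ) (bc : ℝ) (hbc : 0 < bc)
    (hfc : ∀ s : ℝ, DifferentiableAt ℝ fc s ∧ DifferentiableAt ℝ (deriv fc) s ∧
      deriv (deriv fc) s = κ * fc s)
    (hfcpos : ∀ s ∈ Set.Ico (0:ℝ) bc, 0 < fc s)
    (hfczero : fc bc = 0)
    (H : ℝ → ℝ)
    (hHdiff : ∀ t ∈ Set.Ico t₀ b, DifferentiableAt ℝ H t)
    (hHineq : ∀ t ∈ Set.Ico t₀ b,
      deriv H t + (H t) ^ 2 / ((n : ℝ) - 1) ≤ ((n : ℝ) - 1) * κ)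
    (hH0' : H t₀ * fc 0 = ((n : ℝ) - 1) * deriv fc 0) :
    (∀ t ∈ Set.Ico t₀ (min b (t₀ + bc)),
      H t ≤ ((n : ℝ) - 1) * deriv fc (t - t₀) / fc (t - t₀)) ∧
    b ≤ t₀ + bc := by
  have hn1 : (0:ℝ) < (n:ℝ) - 1 := by
    have : (2:ℝ) ≤ (n:ℝ) := by exact_mod_cast hn
    linarith
  have hcomp := riccati_comparison n hn κ t₀ b fc bc hfc hfcpos H hHdiff hHineq hH0'
  have part1 : ∀ t ∈ Set.Ico t₀ (min b (t₀ + bc)),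
      H t ≤ ((n : ℝ) - 1) * deriv fc (t - t₀) / fc (t - t₀) := by
    intro t ht
    have hpos : 0 < fc (t - t₀) := by
      refine hfcpos _ ⟨sub_nonneg.2 ht.1, ?_⟩
      have := lt_of_lt_of_le ht.2 (min_le_right _ _)
      linarith
    exact (le_div_iff₀ hpos).2 (hcomp t ht)
  refine ⟨part1, ?_⟩
  by_contra hlt
  push_neg at hlt
  set T : ℝ := t₀ + bc with hTdef
  have hTmem : T ∈ Set.Ico t₀ b := ⟨by simp [hTdef]; linarith, hlt⟩
  have hTmin : min b T = T := min_eq_right hlt.le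
  have hfcdiff : Differentiable ℝ fc := fun s => (hfc s).1
  have hfc'diff : Differentiable ℝ (deriv fc) := fun s => (hfc s).2.1
  have hcontfc : Continuous fc := hfcdiff.continuous
  have hcontfc' : Continuous (deriv fc) := hfc'diff.continuous
  have hfc0pos : 0 < fc 0 := hfcpos 0 ⟨le_rfl, hbc⟩
  -- deriv fc bc ≤ 0
  have hd_le : deriv fc bc ≤ 0 := by
    have hs := (hfc bc).1.hasDerivAt
    rw [hasDerivAt_iff_tendsto_slope] at hs
    have hs' : Tendsto (slope fc bc) (𝓝[<] bc) (𝓝 (deriv fc bc)) :=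
      hs.mono_left (nhdsWithin_mono bc (fun x (hx : x < bc) => ne_of_lt hx))
    refine le_of_tendsto hs' ?_
    have hev : ∀ᶠ x in 𝓝[<] bc, (0:ℝ) < x :=
      eventually_nhdsWithin_of_eventually_nhds (eventually_gt_nhds hbc)
    filter_upwards [hev, eventually_mem_nhdsWithin] with x hx1 (hx2 : x < bc)
    rw [slope_def_field]
    have h1 : 0 ≤ fc x - fc bc := by
      rw [hfczero]; simpa using (hfcpos x ⟨hx1.le, hx2⟩).le
    have h2 : x - bc ≤ 0 := by linarith
    exact div_nonpos_of_nonneg_of_nonpos h1 h2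
  -- deriv fc bc ≠ 0 (energy / exponential argument)
  have hd_ne : deriv fc bc ≠ 0 := by
    intro hd0
    set E : ℝ → ℝ := fun s => (deriv fc s) ^ 2 - κ * (fc s) ^ 2 with hEdef
    have hE : ∀ s, HasDerivAt E 0 s := by
      intro s
      have h1 : HasDerivAt (fun s => (deriv fc s) ^ 2)
          ((2:ℕ) * (deriv fc s) ^ 1 * (κ * fc s)) s := by
        have := ((hfc s).2.1.hasDerivAt).pow 2
        rwa [(hfc s).2.2] at this
      have h2 : HasDerivAt (fun s => κ * (fc s) ^ 2)
          (κ * ((2:ℕ) * (fc s) ^ 1 * deriv fc s)) s :=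
        (((hfc s).1.hasDerivAt).pow 2).const_mul κ
      have := h1.sub h2
      refine this.congr_deriv ?_
      push_cast
      ring
    have hEconst : ∀ x y, E x = E y :=
      is_const_of_deriv_eq_zero (fun s => (hE s).differentiableAt) (fun s => (hE s).deriv)
    have hE0 : ∀ s, (deriv fc s) ^ 2 = κ * (fc s) ^ 2 := by
      intro s
      have := hEconst s bc
      simp only [hEdef, hfczero, hd0] at this
      have h0 : (0:ℝ) ^ 2 - κ * (0:ℝ) ^ 2 = 0 := by ring
      rw [h0] at this
      linarith
    rcases lt_trichotomy κ 0 with hk | hk | hk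
    · nlinarith [hE0 0, sq_nonneg (deriv fc 0), mul_pos hfc0pos hfc0pos]
    · have hderiv0 : ∀ s, deriv fc s = 0 := by
        intro s
        have := hE0 s
        rw [hk, zero_mul] at this
        exact pow_eq_zero_iff (n := 2) (by norm_num) |>.mp this
      have := is_const_of_deriv_eq_zero hfcdiff hderiv0 bc 0
      rw [hfczero] at this
      linarith
    · set r : ℝ := Real.sqrt κ with hrdef
      have hr : 0 < r := Real.sqrt_pos.2 hk
      have hr2 : r ^ 2 = κ := Real.sq_sqrt hk.le
      set h : ℝ → ℝ := fun s => deriv fc s - r * fc s with hhdef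
      have hh : ∀ s, HasDerivAt h ((-r) * h s) s := by
        intro s
        have := ((hfc s).2.1.hasDerivAt).sub (((hfc s).1.hasDerivAt).const_mul r)
        refine this.congr_deriv ?_
        rw [(hfc s).2.2, ← hr2]
        simp only [hhdef]
        ring
      have hhbc : h bc = 0 := by simp [hhdef, hfczero, hd0]
      have hhzero : ∀ s, h s = 0 := by
        intro s
        have := const_decay h (-r) hh bc s
        rw [hhbc, zero_mul] at this
        have hexp : Real.exp (-(-r) * s) ≠ 0 := Real.exp_ne_zero _
        field_simp at this
        exact (mul_eq_zero.1 this.symm).resolve_right (Real.exp_ne_zero _)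
      have hfcd : ∀ s, HasDerivAt fc (r * fc s) s := by
        intro s
        have h1 := (hfc s).1.hasDerivAt
        have h2 : deriv fc s = r * fc s := by have := hhzero s; simp [hhdef] at this; linarith
        rwa [h2] at h1
      have := const_decay fc r hfcd bc 0
      rw [hfczero, zero_mul] at this
      have hexp : Real.exp (-r * 0) ≠ 0 := Real.exp_ne_zero _
      have : fc 0 = 0 := by
        field_simp at this
        exact (mul_eq_zero.1 this.symm).resolve_right (Real.exp_ne_zero _)
      linarith
  have hd_neg : deriv fc bc < 0 := lt_of_le_of_ne hd_le hd_ne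
  -- limits
  have hevT : ∀ᶠ t in 𝓝[<] T, t ∈ Set.Ioo t₀ T := by
    have h1 : ∀ᶠ t in 𝓝[<] T, t₀ < t :=
      eventually_nhdsWithin_of_eventually_nhds (eventually_gt_nhds (lt_add_of_pos_right t₀ hbc))
    filter_upwards [h1, eventually_mem_nhdsWithin] with t ht1 (ht2 : t < T)
    exact ⟨ht1, ht2⟩
  have hsub : Tendsto (fun t => t - t₀) (𝓝[<] T) (𝓝[<] bc) := by
    apply tendsto_nhdsWithin_of_tendsto_nhds_of_eventually_within
    · have h1 : Tendsto (fun t : ℝ => t - t₀) (𝓝 T) (𝓝 (T - t₀)) :=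
        (continuous_id.sub continuous_const).tendsto T
      have h2 : T - t₀ = bc := by simp [hTdef]
      rw [h2] at h1
      exact h1.mono_left nhdsWithin_le_nhds
    · filter_upwards [eventually_mem_nhdsWithin] with t (ht : t < T)
      simp only [Set.mem_Iio]
      simp [hTdef] at ht ⊢
      linarith
  have hfb : Tendsto (fun t => fc (t - t₀)) (𝓝[<] T) (𝓝[>] 0) := by
    apply tendsto_nhdsWithin_of_tendsto_nhds_of_eventually_within
    · have h1 : Tendsto fc (𝓝 bc) (𝓝 0) := by
        have := hcontfc.tendsto bc
        rwa [hfczero] at this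
      exact h1.comp (hsub.mono_right nhdsWithin_le_nhds)
    · filter_upwards [hevT] with t ht
      exact hfcpos _ ⟨by linarith [ht.1], by have := ht.2; simp [hTdef] at this; linarith⟩
  have hinv : Tendsto (fun t => (fc (t - t₀))⁻¹) (𝓝[<] T) atTop :=
    tendsto_inv_nhdsGT_zero.comp hfb
  have hnum : Tendsto (fun t => ((n:ℝ) - 1) * deriv fc (t - t₀)) (𝓝[<] T)
      (𝓝 (((n:ℝ) - 1) * deriv fc bc)) :=
    tendsto_const_nhds.mul ((hcontfc'.tendsto bc).comp (hsub.mono_right nhdsWithin_le_nhds))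
  have hlimneg : ((n:ℝ) - 1) * deriv fc bc < 0 := mul_neg_of_pos_of_neg hn1 hd_neg
  have hatbot : Tendsto (fun t => ((n:ℝ) - 1) * deriv fc (t - t₀) / fc (t - t₀))
      (𝓝[<] T) atBot := by
    simp only [div_eq_mul_inv]
    exact hnum.neg_mul_atTop hlimneg hinv
  have hHT : Tendsto H (𝓝[<] T) (𝓝 (H T)) :=
    ((hHdiff T hTmem).continuousAt.tendsto).mono_left nhdsWithin_le_nhds
  have hHev : ∀ᶠ t in 𝓝[<] T,
      H t ≤ ((n:ℝ) - 1) * deriv fc (t - t₀) / fc (t - t₀) := by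
    filter_upwards [hevT] with t ht
    exact part1 t ⟨ht.1.le, by rw [hTmin]; exact ht.2⟩
  have habs : Tendsto H (𝓝[<] T) atBot :=
    tendsto_atBot_mono' _ hHev hatbot
  exact absurd habs (not_tendsto_atBot_of_tendsto_nhds hHT)

/-- Mean curvature blow-up forces focal points: if `H` satisfies the Riccati (Raychaudhuri)
inequality `H' + H²/(n−1) ≤ (n−1)κ` with `H t₀ = β̃`, and `fc` is the comparison warping
function with `(n−1) fc'(0)/fc(0) = β̃` and first positive zero `bc`, then `H` is bounded by
the comparison mean curvature `H_{κ,β̃}(t−t₀) = (n−1) fc'(t−t₀)/fc(t−t₀)` and `H` cannot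
remain defined (finite and differentiable) past `t₀ + bc`, i.e. `b ≤ t₀ + bc`. -/
theorem mean_curvature_blowup (n : ℕ) (hn : 2 ≤ n) (κ t₀ b betat : ℝ) (hb : t₀ < b)
    (fc : ℝ → ℝ) (bc : ℝ) (hbc : 0 < bc)
    (hfc : ∀ s : ℝ, DifferentiableAt ℝ fc s ∧ DifferentiableAt ℝ (deriv fc) s ∧
      deriv (deriv fc) s = κ * fc s)
    (hfcne : ∀ s ∈ Set.Ico (0:ℝ) bc, fc s ≠ 0)
    (hfczero : fc bc = 0)
    (hinit : ((n : ℝ) - 1) * deriv fc 0 / fc 0 = betat)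
    (H : ℝ → ℝ)
    (hHdiff : ∀ t ∈ Set.Ico t₀ b, DifferentiableAt ℝ H t)
    (hHineq : ∀ t ∈ Set.Ico t₀ b,
      deriv H t + (H t) ^ 2 / ((n : ℝ) - 1) ≤ ((n : ℝ) - 1) * κ)
    (hH0 : H t₀ = betat) :
    (∀ t ∈ Set.Ico t₀ (min b (t₀ + bc)),
      H t ≤ ((n : ℝ) - 1) * deriv fc (t - t₀) / fc (t - t₀)) ∧
    b ≤ t₀ + bc := by
  have hfc0 : fc 0 ≠ 0 := hfcne 0 ⟨le_rfl, hbc⟩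
  have hdifffc : Differentiable ℝ fc := fun s => (hfc s).1
  have hcontfc : Continuous fc := hdifffc.continuous
  rcases hfc0.lt_or_gt with hneg | hpos
  · -- fc 0 < 0 : apply aux to -fc
    set F : ℝ → ℝ := fun s => -fc s with hFdef
    have hderivF : deriv F = fun s => -deriv fc s := by
      funext s
      exact deriv.neg
    have hfcF : ∀ s : ℝ, DifferentiableAt ℝ F s ∧ DifferentiableAt ℝ (deriv F) s ∧
        deriv (deriv F) s = κ * F s := by
      intro s
      refine ⟨(hfc s).1.neg, ?_, ?_⟩
      · rw [hderivF]; exact (hfc s).2.1.neg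
      · rw [hderivF]
        have : deriv (fun s => -deriv fc s) s = -deriv (deriv fc) s := deriv.neg
        rw [this, (hfc s).2.2]
        simp [hFdef]
    have hFpos : ∀ s ∈ Set.Ico (0:ℝ) bc, 0 < F s := by
      apply pos_on F bc (hcontfc.neg)
      · intro s hs
        simp only [hFdef, ne_eq, neg_eq_zero]
        exact hfcne s hs
      · simp only [hFdef]
        linarith
    have hFzero : F bc = 0 := by simp [hFdef, hfczero]
    have hH0' : H t₀ * F 0 = ((n : ℝ) - 1) * deriv F 0 := by
      rw [hH0, ← hinit, hderivF]
      simp only [hFdef]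
      field_simp
    obtain ⟨h1, h2⟩ := blowup_aux n hn κ t₀ b hb F bc hbc hfcF hFpos hFzero H hHdiff hHineq hH0'
    refine ⟨?_, h2⟩
    intro t ht
    have := h1 t ht
    rw [hderivF] at this
    simp only [hFdef] at this
    rw [mul_neg, neg_div_neg_eq] at this
    exact this
  · have hfcpos := pos_on fc bc hcontfc hfcne hpos
    have hH0' : H t₀ * fc 0 = ((n : ℝ) - 1) * deriv fc 0 := by
      rw [hH0, ← hinit]
      field_simp
    exact blowup_aux n hn κ t₀ b hb fc bc hbc hfc hfcpos hfczero H hHdiff hHineq hH0'
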